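/- arXiv:2005.04759 — 4 statements merged into one kernel-verified Lean document; each statement's English description precedes it below -/
import Mathlib

section
/- Let n be a positive integer, z a positive integer, and y = (y_1,...,y_n) a vector of positive integers (car lengths). If c = (c_1,...,c_n) is a parking sequence for (y; z) (i.e., all n cars park successfully on a street of z-1+y_1+...+y_n spots with the first z-1 occupied by a trailer), then the number of indices j with c_j ≤ z is at least 1, and for each 1 ≤ t ≤ n-1, the number of indices j with c_j ≤ z + (sum of the t largest entries of y) is at least t+1. -/
open Finset

/-- The first empty spot `j` with `c ≤ j ≤ M` (street spots are `1..M`). -/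
def firstEmpty (occ : Finset ℕ) (M c : ℕ) : Option ℕ :=
  (List.range' c (M + 1 - c)).find? (fun j => decide (j ∉ occ))

/-- Park cars with preferences `cs` and lengths `ys` on a street with spots `1..M`,
where `occ` is the set of already-occupied spots.  Returns the list of starting
spots of the cars (in order of entry) if all cars can park. -/
def parkAux (M : ℕ) : Finset ℕ → List ℕ → List ℕ → Option (List ℕ)
  | _, [], [] => some []
  | occ, c :: cs, y :: ys =>
    match firstEmpty occ M c with
    | none => none
    | some j =>
      if (∀ i ∈ Finset.Ico j (j + y), i ∉ occ) ∧ j + y - 1 ≤ M then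
        (parkAux M (occ ∪ Finset.Ico j (j + y)) cs ys).map (j :: ·)
      else none
  | _, _, _ => none

/-- Outcome of the parking process for length vector `ys`, preference sequence `cs`,
and trailer parameter `z` (the trailer occupies spots `1,…,z-1`); the street has
`z - 1 + ys.sum` spots. -/
def parkResult (ys cs : List ℕ) (z : ℕ) : Option (List ℕ) :=
  parkAux (z - 1 + ys.sum) (Finset.Ico 1 z) cs ys

/-- `cs` is a parking sequence for `(ys; z)`. -/
def IsParkingSeq (ys cs : List ℕ) (z : ℕ) : Prop :=
  cs.length = ys.length ∧ (∀ c ∈ cs, 1 ≤ c) ∧ (parkResult ys cs z).isSome = true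

/-- Starting spots of the standard (no-gap, in order) final configuration. -/
def standardStarts (z : ℕ) : List ℕ → List ℕ
  | [] => []
  | y :: ys => z :: standardStarts (z + y) ys

/-- `cs` parks `ys` in the standard order `T, C₁, …, Cₙ`. -/
def ParksStandard (ys cs : List ℕ) (z : ℕ) : Prop :=
  parkResult ys cs z = some (standardStarts z ys)

/-- `cs` is a permutation-invariant parking sequence for `(ys; z)`. -/
def PermInvariant (ys cs : List ℕ) (z : ℕ) : Prop :=
  ∀ cs' : List ℕ, cs'.Perm cs → IsParkingSeq ys cs' z

/-- `cs` is a strong parking sequence for `{ys; z}`. -/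
def StrongParkingSeq (ys cs : List ℕ) (z : ℕ) : Prop :=
  ∀ ys' : List ℕ, ys'.Perm ys → IsParkingSeq ys' cs z

/-- The nondecreasing rearrangement (order statistics) of a list. -/
def orderStats (l : List ℕ) : List ℕ :=
  Multiset.sort (l : Multiset ℕ) (· ≤ ·)

/-- `xs` is a `u`-parking function. -/
def IsUPF (u xs : List ℕ) : Prop :=
  xs.length = u.length ∧ (∀ x ∈ xs, 1 ≤ x) ∧
    ∀ i < u.length, (orderStats xs).getD i 0 ≤ u.getD i 0

def cover (ps : List (ℕ × ℕ)) : Finset ℕ :=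
  ps.foldr (fun p s => Finset.Ico p.1 (p.1 + p.2) ∪ s) ∅

lemma mem_cover {x : ℕ} : ∀ {ps : List (ℕ × ℕ)},
    x ∈ cover ps ↔ ∃ p ∈ ps, x ∈ Finset.Ico p.1 (p.1 + p.2)
  | [] => by simp [cover]
  | p :: ps => by
      simp only [cover, List.foldr_cons, Finset.mem_union, List.mem_cons]
      rw [show (List.foldr (fun p s => Finset.Ico p.1 (p.1 + p.2) ∪ s) ∅ ps) = cover ps from rfl,
        mem_cover]
      constructor
      · rintro (h | ⟨q, hq, hx⟩)
        · exact ⟨p, Or.inl rfl, h⟩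
        · exact ⟨q, Or.inr hq, hx⟩
      · rintro ⟨q, (rfl | hq), hx⟩
        · exact Or.inl hx
        · exact Or.inr ⟨q, hq, hx⟩

lemma cover_card_le : ∀ (ps : List (ℕ × ℕ)),
    (cover ps).card ≤ (ps.map Prod.snd).sum
  | [] => by simp [cover]
  | p :: ps => by
      simp only [cover, List.foldr_cons, List.map_cons, List.sum_cons]
      calc (Finset.Ico p.1 (p.1 + p.2) ∪ cover ps).card
          ≤ (Finset.Ico p.1 (p.1 + p.2)).card + (cover ps).card := Finset.card_union_le _ _
        _ ≤ p.2 + (ps.map Prod.snd).sum := by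
            rw [Nat.card_Ico]; exact Nat.add_le_add (by omega) (cover_card_le ps)

lemma firstEmpty_le {occ : Finset ℕ} {M c j : ℕ} (h : firstEmpty occ M c = some j) :
    c ≤ j ∧ j ∉ occ := by
  unfold firstEmpty at h
  have h1 := List.mem_of_find?_eq_some h
  have h2 := List.find?_some h
  simp only [decide_eq_true_eq] at h2
  exact ⟨(List.mem_range'_1.mp h1).1, h2⟩

lemma parkAux_spec (M : ℕ) : ∀ (ys cs l : List ℕ) (occ : Finset ℕ),
    parkAux M occ cs ys = some l →
    l.length = ys.length ∧ cs.length = ys.length ∧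
    (∀ q ∈ cs.zip (l.zip ys), q.1 ≤ q.2.1 ∧ q.2.1 + q.2.2 ≤ M + 1) ∧
    (occ ∪ cover (l.zip ys)).card = occ.card + ys.sum
  | [], [], l, occ => by
      intro h
      simp only [parkAux, Option.some.injEq] at h
      subst h
      simp [cover]
  | [], c :: cs, l, occ => by intro h; simp [parkAux] at h
  | y :: ys, [], l, occ => by intro h; simp [parkAux] at h
  | y :: ys, c :: cs, l, occ => by
      intro h
      rw [parkAux] at h
      cases hf : firstEmpty occ M c with
      | none => rw [hf] at h; simp at h
      | some j =>
        rw [hf] at h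
        simp at h
        · obtain ⟨⟨hdis, hbound⟩, l', hl', rfl⟩ := h
          obtain ⟨hlen1, hlen2, hq, hcard⟩ := parkAux_spec M ys cs l' _ hl'
          obtain ⟨hcj, hjocc⟩ := firstEmpty_le hf
          refine ⟨by simp [hlen1], by simp [hlen2], ?_, ?_⟩
          · intro q hq'
            simp only [List.zip_cons_cons, List.mem_cons] at hq'
            rcases hq' with rfl | hq'
            · exact ⟨hcj, hbound⟩
            · exact hq q hq'
          · have hcover : cover ((j :: l').zip (y :: ys)) =
                Finset.Ico j (j + y) ∪ cover (l'.zip ys) := rfl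
            rw [hcover, ← Finset.union_assoc, hcard,
              Finset.card_union_of_disjoint
                (Finset.disjoint_right.mpr (fun a ha => hdis a (Finset.mem_Ico.mp ha).1 (Finset.mem_Ico.mp ha).2)),
              Nat.card_Ico]
            simp only [List.sum_cons]
            omega

lemma add_head_drop (a : ℕ) (L : List ℕ) (ha : ∀ b ∈ L, a ≤ b) (k : ℕ) (hk : k ≤ L.length) :
    a + (L.drop k).sum ≤ ((a :: L).drop k).sum := by
  cases k with
  | zero => simp
  | succ k' =>
    have hk' : k' < L.length := by omega
    rw [List.drop_succ_cons, List.drop_eq_getElem_cons hk']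
    simp only [List.sum_cons]
    have : a ≤ L[k'] := ha _ (List.getElem_mem hk')
    omega

lemma sum_le_dropSum : ∀ {s L : List ℕ}, s.Sublist L → L.Pairwise (· ≤ ·) →
    ∀ t, s.length ≤ t → s.sum ≤ (L.drop (L.length - t)).sum := by
  intro s L hs
  induction hs with
  | slnil => intro _ t _; simp
  | @cons L' L'' a hsub ih =>
    -- s = L', and L' <+ L'', full list a :: L''
    intro hL t ht
    have hL' : L''.Pairwise (· ≤ ·) := hL.of_cons
    have h1 := ih hL' t ht
    by_cases hc : t ≤ L''.length
    · have he : (a :: L'').length - t = (L''.length - t) + 1 := by simp; omega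
      rw [he, List.drop_succ_cons]
      exact h1
    · have he : (a :: L'').length - t = 0 := by simp; omega
      rw [he, List.drop_zero]
      have he2 : L''.length - t = 0 := by omega
      rw [he2, List.drop_zero] at h1
      simp only [List.sum_cons]
      omega
  | @cons_cons s' L'' a hsub ih =>
    -- s = a :: s', L = a :: L''
    intro hL t ht
    have hL' : L''.Pairwise (· ≤ ·) := hL.of_cons
    have hmem : ∀ b ∈ L'', a ≤ b := fun b hb => List.rel_of_pairwise_cons hL hb
    have ht' : s'.length ≤ t - 1 := by simp only [List.length_cons] at ht; omega
    have h1 := ih hL' (t - 1) ht'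
    have hst : 1 ≤ t := by simp only [List.length_cons] at ht; omega
    have he : (a :: L'').length - t = L''.length - (t - 1) := by simp only [List.length_cons]; omega
    rw [he]
    simp only [List.sum_cons]
    calc a + s'.sum ≤ a + (L''.drop (L''.length - (t - 1))).sum := Nat.add_le_add_left h1 a
      _ ≤ ((a :: L'').drop (L''.length - (t - 1))).sum :=
          add_head_drop a L'' hmem _ (by omega)

theorem stmt0 (n z : ℕ) (hn : 0 < n) (hz : 0 < z) (ys cs : List ℕ)
    (hylen : ys.length = n) (hypos : ∀ y ∈ ys, 0 < y)
    (hps : IsParkingSeq ys cs z) :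
    1 ≤ cs.countP (fun c => decide (c ≤ z)) ∧
    ∀ t, 1 ≤ t → t ≤ n - 1 →
      t + 1 ≤ cs.countP (fun c => decide (c ≤ z + ((orderStats ys).drop (n - t)).sum)) := by
  obtain ⟨hlen, hcpos, hsome⟩ := hps
  obtain ⟨l, hl⟩ := Option.isSome_iff_exists.mp hsome
  rw [parkResult] at hl
  set M := z - 1 + ys.sum with hMdef
  obtain ⟨hll, hcl, hq, hcard⟩ := parkAux_spec M ys cs l (Finset.Ico 1 z) hl
  -- basic facts
  have hperm : (orderStats ys).Perm ys := by
    rw [← Multiset.coe_eq_coe, orderStats, Multiset.sort_eq]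
  have hoslen : (orderStats ys).length = n := by
    rw [hperm.length_eq, hylen]
  have hsum_pos : 1 ≤ ys.sum := by
    cases ys with
    | nil => simp at hylen; omega
    | cons y ys' =>
      have := hypos y (by simp)
      simp only [List.sum_cons]; omega
  have hM : z ≤ M := by omega
  have hcardIco : (Finset.Ico 1 z).card = z - 1 := by rw [Nat.card_Ico]
  have hF : Finset.Ico 1 z ∪ cover (l.zip ys) = Finset.Icc 1 M := by
    apply Finset.eq_of_subset_of_card_le
    · intro x hx
      rcases Finset.mem_union.mp hx with hx | hx
      · have := Finset.mem_Ico.mp hx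
        exact Finset.mem_Icc.mpr ⟨this.1, by omega⟩
      · obtain ⟨p, hp, hxp⟩ := mem_cover.mp hx
        have hxI := Finset.mem_Ico.mp hxp
        have hp' : p ∈ (cs.zip (l.zip ys)).map Prod.snd := by
          rw [List.map_snd_zip (by rw [List.length_zip]; omega)]
          exact hp
        obtain ⟨q, hqmem, hq2⟩ := List.mem_map.mp hp'
        have hcq : 1 ≤ q.1 := hcpos q.1 (List.of_mem_zip hqmem).1
        have := hq q hqmem
        rw [hq2] at this
        exact Finset.mem_Icc.mpr ⟨by omega, by omega⟩
    · rw [Nat.card_Icc, hcard, hcardIco]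
      omega
  have hmem_trip : ∀ p ∈ l.zip ys, ∃ q ∈ cs.zip (l.zip ys), q.2 = p := by
    intro p hp
    have hp' : p ∈ (cs.zip (l.zip ys)).map Prod.snd := by
      rw [List.map_snd_zip (by rw [List.length_zip]; omega)]
      exact hp
    obtain ⟨q, hqmem, hq2⟩ := List.mem_map.mp hp'
    exact ⟨q, hqmem, hq2⟩
  constructor
  · -- part 1
    have hzF : z ∈ Finset.Ico 1 z ∪ cover (l.zip ys) := by
      rw [hF]; exact Finset.mem_Icc.mpr ⟨hz, hM⟩
    rcases Finset.mem_union.mp hzF with hx | hx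
    · exact absurd (Finset.mem_Ico.mp hx).2 (by omega)
    · obtain ⟨p, hp, hxp⟩ := mem_cover.mp hx
      obtain ⟨q, hqmem, hq2⟩ := hmem_trip p hp
      have hIxp := Finset.mem_Ico.mp hxp
      have hq1 := (hq q hqmem).1
      rw [hq2] at hq1
      refine List.countP_pos_iff.mpr ⟨q.1, (List.of_mem_zip hqmem).1, ?_⟩
      simp only [decide_eq_true_eq]
      omega
  · -- part 2
    intro t ht1 ht2
    set S := ((orderStats ys).drop (n - t)).sum with hSdef
    set B := z + S with hBdef
    -- B ≤ M
    have hsplit : ys.sum = ((orderStats ys).take (n - t)).sum + S := by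
      rw [hSdef, ← List.sum_append, List.take_append_drop, hperm.sum_eq]
    have htake_pos : 1 ≤ ((orderStats ys).take (n - t)).sum := by
      have hlen' : ((orderStats ys).take (n - t)).length = n - t := by
        rw [List.length_take, hoslen]; omega
      cases htk : (orderStats ys).take (n - t) with
      | nil => rw [htk] at hlen'; simp at hlen'; omega
      | cons a as =>
        have ha : a ∈ ys := hperm.mem_iff.mp (List.mem_of_mem_take (htk ▸ (by simp : a ∈ (a :: as))))
        have := hypos a ha
        simp only [List.sum_cons]; omega
    have hBM : B ≤ M := by omega
    -- the filtered pairs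
    set pr : ℕ × ℕ → Bool := fun p => decide (p.1 ≤ B ∧ z < p.1 + p.2) with hprdef
    have hIsub : Finset.Icc z B ⊆ cover ((l.zip ys).filter pr) := by
      intro x hx
      have hxI := Finset.mem_Icc.mp hx
      have hxF : x ∈ Finset.Ico 1 z ∪ cover (l.zip ys) := by
        rw [hF]; exact Finset.mem_Icc.mpr ⟨by omega, by omega⟩
      rcases Finset.mem_union.mp hxF with hx' | hx'
      · exact absurd (Finset.mem_Ico.mp hx').2 (by omega)
      · obtain ⟨p, hp, hxp⟩ := mem_cover.mp hx'
        have hIxp := Finset.mem_Ico.mp hxp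
        refine mem_cover.mpr ⟨p, ?_, hxp⟩
        rw [List.mem_filter]
        exact ⟨hp, by simp only [hprdef, decide_eq_true_eq]; omega⟩
    have hcount : t + 1 ≤ (l.zip ys).countP pr := by
      by_contra hcon
      push_neg at hcon
      -- the sublist of lengths
      set s' := ((l.zip ys).filter pr).map Prod.snd with hs'def
      have hs'len : s'.length ≤ t := by
        rw [hs'def, List.length_map, ← List.countP_eq_length_filter]
        omega
      have hs'sub : s'.Sublist ys := by
        have h1 : ((l.zip ys).filter pr).Sublist (l.zip ys) := List.filter_sublist
        have h2 := h1.map Prod.snd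
        rwa [List.map_snd_zip hll.ge] at h2
      have hsp : s'.Subperm (orderStats ys) := hs'sub.subperm.trans hperm.symm.subperm
      obtain ⟨s'', hs''p, hs''sub⟩ := hsp
      have hub := sum_le_dropSum hs''sub (Multiset.pairwise_sort _ _) t (hs''p.length_eq ▸ hs'len)
      rw [hoslen] at hub
      have hlb : S + 1 ≤ s'.sum := by
        calc S + 1 = (Finset.Icc z B).card := by rw [Nat.card_Icc]; omega
          _ ≤ (cover ((l.zip ys).filter pr)).card := Finset.card_le_card hIsub
          _ ≤ s'.sum := cover_card_le _
      rw [hs''p.sum_eq] at hub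
      omega
    -- transfer count to cs
    calc t + 1 ≤ (l.zip ys).countP pr := hcount
      _ = (cs.zip (l.zip ys)).countP (pr ∘ Prod.snd) := by
          rw [← List.countP_map, List.map_snd_zip (by rw [List.length_zip]; omega)]
      _ ≤ (cs.zip (l.zip ys)).countP (fun q => decide (q.1 ≤ B)) := by
          apply List.countP_mono_left
          intro q hqmem hpq
          simp only [Function.comp, hprdef, decide_eq_true_eq] at hpq
          have := (hq q hqmem).1
          simp only [decide_eq_true_eq]
          omega
      _ = cs.countP (fun c => decide (c ≤ B)) := by
          conv_rhs => rw [← List.map_fst_zip (by rw [List.length_zip]; omega : cs.length ≤ (l.zip ys).length)]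
          rw [List.countP_map]
          rfl
end

section
/- Let y = (y_1,...,y_n) be a vector of positive integers and z a positive integer. A nondecreasing sequence c = (c_1 ≤ c_2 ≤ ... ≤ c_n) of positive integers is a parking sequence for (y; z) if and only if c_i ≤ z + y_1 + y_2 + ... + y_{i-1} for all i ∈ [n]. Moreover, in that case the final parking configuration is the trailer followed by C_1, C_2, ..., C_n in order with no gaps. -/
open Finset

-- auxiliary lemmas
lemma firstEmpty_Ico (Z M c : ℕ) (hc1 : 1 ≤ c) (hcZ : c ≤ Z) (hZM : Z ≤ M) :
    firstEmpty (Finset.Ico 1 Z) M c = some Z := by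
  unfold firstEmpty
  have h2 : List.range' c (Z - c) ++ List.range' Z (M + 1 - Z)
      = List.range' c (M + 1 - c) := by
    have := List.range'_append_1 (s := c) (m := Z - c) (n := M + 1 - Z)
    rw [show c + (Z - c) = Z by omega] at this
    rw [this]; congr 1; omega
  rw [← h2, List.find?_append]
  have h3 : (List.range' c (Z - c)).find? (fun j => decide (j ∉ Finset.Ico 1 Z)) = none := by
    rw [List.find?_eq_none]
    intro x hx
    rw [List.mem_range'] at hx
    obtain ⟨i, hi, rfl⟩ := hx
    simp only [decide_not, Bool.not_eq_true, decide_eq_false_iff_not, not_not]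
    simp [Finset.mem_Ico]; omega
  rw [h3]
  have h4 : M + 1 - Z = (M - Z) + 1 := by omega
  rw [h4, List.range'_succ, List.find?_cons_of_pos]
  · simp
  · simp

lemma parkAux_step (Z M c y : ℕ) (cs ys : List ℕ) (hZ : 1 ≤ Z) (hc1 : 1 ≤ c)
    (hcZ : c ≤ Z) (hy : 1 ≤ y) (hM : Z + y - 1 ≤ M) :
    parkAux M (Finset.Ico 1 Z) (c :: cs) (y :: ys)
      = (parkAux M (Finset.Ico 1 (Z + y)) cs ys).map (Z :: ·) := by
  rw [parkAux, firstEmpty_Ico Z M c hc1 hcZ (by omega)]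
  dsimp only
  have hcond : (∀ i ∈ Finset.Ico Z (Z + y), i ∉ Finset.Ico 1 Z) ∧ Z + y - 1 ≤ M := by
    refine ⟨fun i hi => ?_, hM⟩
    simp only [Finset.mem_Ico] at hi ⊢
    omega
  rw [if_pos hcond]
  have : Finset.Ico 1 Z ∪ Finset.Ico Z (Z + y) = Finset.Ico 1 (Z + y) := by
    ext x; simp only [Finset.mem_union, Finset.mem_Ico]; omega
  rw [this]

lemma parkAux_count : ∀ (cs ys : List ℕ) (M a : ℕ) (occ : Finset ℕ) (l : List ℕ),
    parkAux M occ cs ys = some l → (∀ c ∈ cs, a ≤ c) → (∀ y ∈ ys, 0 < y) →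
    ys.sum ≤ ((Finset.Ico a (M + 1)) \ occ).card
  | [], [], _, _, _, _, _, _, _ => by simp
  | [], y :: ys, M, a, occ, l, h, _, _ => by simp [parkAux] at h
  | c :: cs, [], M, a, occ, l, h, _, _ => by simp [parkAux] at h
  | c :: cs, y :: ys, M, a, occ, l, h, hge, hpos => by
    rw [parkAux] at h
    cases hj : firstEmpty occ M c with
    | none => rw [hj] at h; simp at h
    | some j =>
      rw [hj] at h
      dsimp only at h
      by_cases hcond : (∀ i ∈ Finset.Ico j (j + y), i ∉ occ) ∧ j + y - 1 ≤ M
      · rw [if_pos hcond] at h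
        obtain ⟨l', hl', rfl⟩ := Option.map_eq_some_iff.mp h
        have hjr := List.mem_of_find?_eq_some hj
        rw [List.mem_range'] at hjr
        obtain ⟨i, hi, hji⟩ := hjr
        have hcj : c ≤ j := by omega
        have hjM : j ≤ M := by omega
        have hy : 0 < y := hpos y (by simp)
        have IH := parkAux_count cs ys M a (occ ∪ Finset.Ico j (j + y)) l' hl'
          (fun c' hc' => hge c' (by simp [hc'])) (fun y' hy' => hpos y' (by simp [hy']))
        have hac : a ≤ c := hge c (by simp)
        have hsub : (Finset.Ico a (M + 1) \ (occ ∪ Finset.Ico j (j + y)))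
            ∪ Finset.Ico j (j + y) ⊆ Finset.Ico a (M + 1) \ occ := by
          intro x hx
          simp only [Finset.mem_union, Finset.mem_sdiff, Finset.mem_Ico, not_or] at hx
          simp only [Finset.mem_sdiff, Finset.mem_Ico]
          rcases hx with ⟨⟨hx1, hx2⟩⟩ | hx2
          · exact ⟨hx1, hx2.1⟩
          · refine ⟨⟨by omega, by omega⟩, hcond.1 x (by simp [Finset.mem_Ico]; omega)⟩
        have hdis : Disjoint (Finset.Ico a (M + 1) \ (occ ∪ Finset.Ico j (j + y)))
            (Finset.Ico j (j + y)) := by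
          rw [Finset.disjoint_left]
          intro x hx hx2
          simp only [Finset.mem_sdiff, Finset.mem_union, not_or] at hx
          exact hx.2.2 hx2
        calc (y :: ys).sum = ys.sum + y := by simp [List.sum_cons]; omega
          _ ≤ (Finset.Ico a (M + 1) \ (occ ∪ Finset.Ico j (j + y))).card
              + (Finset.Ico j (j + y)).card := by
              rw [Nat.card_Ico]; omega
          _ = ((Finset.Ico a (M + 1) \ (occ ∪ Finset.Ico j (j + y)))
              ∪ Finset.Ico j (j + y)).card := (Finset.card_union_of_disjoint hdis).symm
          _ ≤ _ := Finset.card_le_card hsub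
      · rw [if_neg hcond] at h; simp at h

lemma parkAux_fail (Z c y : ℕ) (cs ys : List ℕ) (hZ : 1 ≤ Z) (hcZ : Z < c)
    (hsort : List.Pairwise (· ≤ ·) (c :: cs)) (hypos : ∀ y' ∈ y :: ys, 0 < y') :
    parkAux (Z - 1 + (y :: ys).sum) (Finset.Ico 1 Z) (c :: cs) (y :: ys) = none := by
  set M := Z - 1 + (y :: ys).sum with hM
  cases h : parkAux M (Finset.Ico 1 Z) (c :: cs) (y :: ys) with
  | none => rfl
  | some l =>
    exfalso
    rw [List.pairwise_cons] at hsort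
    have hge : ∀ c' ∈ c :: cs, c ≤ c' := by
      intro c' hc'
      rcases List.mem_cons.mp hc' with rfl | hc' 
      · exact le_refl _
      · exact hsort.1 c' hc'
    have hcount := parkAux_count (c :: cs) (y :: ys) M c (Finset.Ico 1 Z) l h hge hypos
    have hcard : ((Finset.Ico c (M + 1)) \ Finset.Ico 1 Z).card ≤ M + 1 - c := by
      calc _ ≤ (Finset.Ico c (M + 1)).card := Finset.card_le_card Finset.sdiff_subset
        _ = M + 1 - c := Nat.card_Ico _ _
    have hy : 0 < y := hypos y (by simp)
    have hsum : (y :: ys).sum = y + ys.sum := by simp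
    omega

lemma parkAux_success : ∀ (ys cs : List ℕ) (Z : ℕ), 1 ≤ Z → cs.length = ys.length →
    (∀ y ∈ ys, 0 < y) → (∀ c ∈ cs, 1 ≤ c) →
    (∀ i < ys.length, cs.getD i 0 ≤ Z + (ys.take i).sum) →
    parkAux (Z - 1 + ys.sum) (Finset.Ico 1 Z) cs ys = some (standardStarts Z ys)
  | [], [], Z, _, _, _, _, _ => by simp [parkAux, standardStarts]
  | [], c :: cs, Z, _, hlen, _, _, _ => by simp at hlen
  | y :: ys, [], Z, _, hlen, _, _, _ => by simp at hlen
  | y :: ys, c :: cs, Z, hZ, hlen, hypos, hcpos, hbound => by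
    have hy : 0 < y := hypos y (by simp)
    have hc : c ≤ Z := by simpa using hbound 0 (by simp)
    have hc1 : 1 ≤ c := hcpos c (by simp)
    have hMs : Z - 1 + (y :: ys).sum = Z - 1 + (y + ys.sum) := by simp
    rw [hMs, parkAux_step Z _ c y cs ys hZ hc1 hc hy (by omega)]
    have hrec := parkAux_success ys cs (Z + y) (by omega) (by simpa using hlen)
      (fun y' h => hypos y' (by simp [h])) (fun c' h => hcpos c' (by simp [h]))
      (by
        intro i hi
        have := hbound (i + 1) (by simpa using Nat.succ_lt_succ hi)
        simpa [Nat.add_assoc] using this)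
    rw [show Z - 1 + (y + ys.sum) = Z + y - 1 + ys.sum by omega, hrec]
    simp [standardStarts]

lemma parkAux_necessary : ∀ (ys cs : List ℕ) (Z : ℕ), 1 ≤ Z → cs.length = ys.length →
    (∀ y ∈ ys, 0 < y) → (∀ c ∈ cs, 1 ≤ c) → List.Pairwise (· ≤ ·) cs →
    (parkAux (Z - 1 + ys.sum) (Finset.Ico 1 Z) cs ys).isSome = true →
    ∀ i < ys.length, cs.getD i 0 ≤ Z + (ys.take i).sum
  | [], _, _, _, _, _, _, _, _ => by intro i hi; simp at hi
  | y :: ys, [], Z, _, hlen, _, _, _, _ => by simp at hlen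
  | y :: ys, c :: cs, Z, hZ, hlen, hypos, hcpos, hsort, hsome => by
    have hy : 0 < y := hypos y (by simp)
    have hc1 : 1 ≤ c := hcpos c (by simp)
    by_cases hc : c ≤ Z
    · rw [show Z - 1 + (y :: ys).sum = Z - 1 + (y + ys.sum) by simp,
        parkAux_step Z _ c y cs ys hZ hc1 hc hy (by omega)] at hsome
      rw [show Z - 1 + (y + ys.sum) = Z + y - 1 + ys.sum by omega] at hsome
      have IH := parkAux_necessary ys cs (Z + y) (by omega) (by simpa using hlen)
        (fun y' h => hypos y' (by simp [h])) (fun c' h => hcpos c' (by simp [h]))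
        ((List.pairwise_cons.mp hsort).2 ) (by simpa using hsome)
      intro i hi
      match i with
      | 0 => simpa using hc
      | i + 1 =>
        have := IH i (by simpa using Nat.lt_of_succ_lt_succ hi)
        simpa [Nat.add_assoc] using this
    · exfalso
      rw [parkAux_fail Z c y cs ys hZ (by omega) hsort hypos] at hsome
      simp at hsome

theorem stmt2 (n z : ℕ) (hn : 0 < n) (hz : 0 < z) (ys cs : List ℕ)
    (hylen : ys.length = n) (hypos : ∀ y ∈ ys, 0 < y)
    (hclen : cs.length = n) (hcpos : ∀ c ∈ cs, 1 ≤ c)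
    (hsort : List.Pairwise (· ≤ ·) cs) :
    (IsParkingSeq ys cs z ↔ ∀ i < n, cs.getD i 0 ≤ z + (ys.take i).sum) ∧
    (IsParkingSeq ys cs z → ParksStandard ys cs z) := by
  subst hylen
  have hfwd : IsParkingSeq ys cs z → ∀ i < ys.length, cs.getD i 0 ≤ z + (ys.take i).sum := by
    rintro ⟨_, _, hsome⟩
    exact parkAux_necessary ys cs z hz hclen hypos hcpos hsort hsome
  have hbwd : (∀ i < ys.length, cs.getD i 0 ≤ z + (ys.take i).sum) → IsParkingSeq ys cs z := by
    intro hb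
    refine ⟨hclen, hcpos, ?_⟩
    rw [parkResult, parkAux_success ys cs z hz hclen hypos hcpos hb]
    rfl
  refine ⟨⟨hfwd, hbwd⟩, fun hps => ?_⟩
  have hb := hfwd hps
  rw [ParksStandard, parkResult, parkAux_success ys cs z hz hclen hypos hcpos hb]
end

section
/- Let y = (y_1 < y_2 < ... < y_n) be a strictly increasing length vector and z ∈ Z_+. Then the set of permutation-invariant parking sequences for (y;z) is exactly [z]^n, and hence its cardinality is z^n. -/
open Finset

/-! ### Auxiliary lemmas -/

lemma parkAux_nil_cons (M : ℕ) (occ : Finset ℕ) (y ys) : parkAux M occ [] (y :: ys) = none := rfl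

lemma parkAux_cons_nil (M : ℕ) (occ : Finset ℕ) (c cs) : parkAux M occ (c :: cs) [] = none := rfl

lemma parkAux_cons (M : ℕ) (occ : Finset ℕ) (c cs y ys) :
    parkAux M occ (c :: cs) (y :: ys) =
      match firstEmpty occ M c with
      | none => none
      | some j =>
        if (∀ i ∈ Finset.Ico j (j + y), i ∉ occ) ∧ j + y - 1 ≤ M then
          (parkAux M (occ ∪ Finset.Ico j (j + y)) cs ys).map (j :: ·)
        else none := rfl

lemma firstEmpty_none (occ : Finset ℕ) (M c : ℕ) (h : M < c) : firstEmpty occ M c = none := by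
  unfold firstEmpty
  have : M + 1 - c = 0 := by omega
  simp [this]

lemma firstEmpty_eq (occ : Finset ℕ) (M c j : ℕ) (h1 : c ≤ j) (h2 : j ≤ M)
    (h3 : ∀ i, c ≤ i → i < j → i ∈ occ) (h4 : j ∉ occ) : firstEmpty occ M c = some j := by
  unfold firstEmpty
  have hsplit : M + 1 - c = (M + 1 - j) + (j - c) := by omega
  have hcj : c + 1 * (j - c) = j := by omega
  rw [hsplit, Nat.add_comm (M + 1 - j), ← List.range'_append (s := c) (m := j - c) (n := M + 1 - j) (step := 1), hcj, List.find?_append]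
  have h5 : List.find? (fun j => decide (j ∉ occ)) (List.range' c (j - c) 1) = none := by
    rw [List.find?_eq_none]
    intro x hx
    simp only [List.mem_range'_1] at hx
    simp only [decide_eq_true_eq, not_not]
    exact h3 x hx.1 (by omega)
  rw [h5]
  have hpos : M + 1 - j = (M - j) + 1 := by omega
  rw [hpos, List.range'_succ, List.find?_cons_of_pos]
  · rfl
  · simpa using h4

lemma park_count (M b : ℕ) : ∀ (cs ys : List ℕ) (occ : Finset ℕ) (l : List ℕ),
    parkAux M occ cs ys = some l → (∀ p ∈ cs, b ≤ p) →
    ys.sum ≤ (Finset.Ico b (M+1) \ occ).card := by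
  intro cs
  induction cs with
  | nil =>
    intro ys occ l h _
    cases ys with
    | nil => simp
    | cons y ys => simp [parkAux_nil_cons] at h
  | cons c cs ih =>
    intro ys occ l h hb
    cases ys with
    | nil => simp [parkAux_cons_nil] at h
    | cons y ys =>
      rw [parkAux_cons] at h
      cases hfe : firstEmpty occ M c with
      | none => rw [hfe] at h; simp at h
      | some j =>
        rw [hfe] at h
        dsimp only at h
        split_ifs at h with hcond
        obtain ⟨hdisj, hbound⟩ := hcond
        rw [Option.map_eq_some_iff] at h
        obtain ⟨l', hl', _⟩ := h
        have hjmem : j ∈ List.range' c (M + 1 - c) := List.mem_of_find?_eq_some hfe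
        rw [List.mem_range'_1] at hjmem
        have hj1 : c ≤ j := hjmem.1
        have hj2 : j ≤ M := by omega
        have hbj : b ≤ j := le_trans (hb c (by simp)) hj1
        have hsub : Finset.Ico j (j + y) ⊆ Finset.Ico b (M+1) \ occ := by
          intro x hx
          rw [Finset.mem_Ico] at hx
          rw [Finset.mem_sdiff, Finset.mem_Ico]
          refine ⟨⟨by omega, by omega⟩, hdisj x (by rw [Finset.mem_Ico]; omega)⟩
        have hrec := ih ys (occ ∪ Finset.Ico j (j + y)) l' hl' (fun p hp => hb p (by simp [hp]))
        have hsd : Finset.Ico b (M+1) \ (occ ∪ Finset.Ico j (j + y))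
            = (Finset.Ico b (M+1) \ occ) \ Finset.Ico j (j + y) := by
          ext x
          simp only [Finset.mem_sdiff, Finset.mem_union]
          tauto
        rw [hsd, Finset.card_sdiff_of_subset hsub] at hrec
        have hle := Finset.card_le_card hsub
        simp only [Nat.card_Ico] at hrec hle ⊢
        simp only [List.sum_cons]
        omega

lemma attack (M : ℕ) : ∀ (S L B L' : List ℕ) (a c T : ℕ), S.length = L.length →
    a < c → c < T → T ≤ M + 1 → 1 ≤ a →
    (∀ p ∈ S, 1 ≤ p ∧ p ≤ a) → (∀ p ∈ B, c ≤ p) →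
    L.sum + L'.sum = (c - a) + (M + 1 - T) →
    (parkAux M (Finset.Ico 1 a ∪ Finset.Ico c T) (S ++ B) (L ++ L')).isSome = true →
    ∃ L₁ L₂, L = L₁ ++ L₂ ∧ L₁.sum = c - a := by
  intro S
  induction S with
  | nil =>
    intro L B L' a c T hlen hac hcT hTM ha hS hB hsum hpark
    exfalso
    rw [List.length_nil] at hlen
    have hL : L = [] := List.eq_nil_of_length_eq_zero hlen.symm
    subst hL
    simp only [List.nil_append, List.sum_nil, zero_add] at hpark hsum
    rw [Option.isSome_iff_exists] at hpark
    obtain ⟨l, hl⟩ := hpark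
    have hcount := park_count M c B L' (Finset.Ico 1 a ∪ Finset.Ico c T) l hl hB
    have : Finset.Ico c (M+1) \ (Finset.Ico 1 a ∪ Finset.Ico c T) = Finset.Ico T (M+1) := by
      ext x
      simp only [Finset.mem_sdiff, Finset.mem_union, Finset.mem_Ico]
      omega
    rw [this, Nat.card_Ico] at hcount
    omega
  | cons p S ih =>
    intro L B L' a c T hlen hac hcT hTM ha hS hB hsum hpark
    cases L with
    | nil => simp at hlen
    | cons y L =>
      simp only [List.cons_append] at hpark
      rw [parkAux_cons] at hpark
      have hp := hS p (by simp)
      have hfe : firstEmpty (Finset.Ico 1 a ∪ Finset.Ico c T) M p = some a := by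
        apply firstEmpty_eq
        · exact hp.2
        · omega
        · intro i h1 h2
          simp only [Finset.mem_union, Finset.mem_Ico]
          left; exact ⟨le_trans hp.1 h1, h2⟩
        · simp only [Finset.mem_union, Finset.mem_Ico]
          omega
      rw [hfe] at hpark
      dsimp only at hpark
      by_cases hfit : a + y ≤ c
      · rw [if_pos] at hpark
        · rw [Option.isSome_map] at hpark
          by_cases hexact : a + y = c
          · exact ⟨[y], L, rfl, by simp; omega⟩
          · have hocc : (Finset.Ico 1 a ∪ Finset.Ico c T) ∪ Finset.Ico a (a + y)
                = Finset.Ico 1 (a + y) ∪ Finset.Ico c T := by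
              ext x
              simp only [Finset.mem_union, Finset.mem_Ico]
              omega
            rw [hocc] at hpark
            obtain ⟨L₁, L₂, hsplit, hsum₁⟩ := ih L B L' (a + y) c T (by simpa using hlen)
              (by omega) hcT hTM (by omega)
              (fun q hq => ⟨(hS q (by simp [hq])).1, le_trans (hS q (by simp [hq])).2 (by omega)⟩)
              hB (by simp at hsum ⊢; omega) hpark
            exact ⟨y :: L₁, L₂, by rw [hsplit]; rfl, by simp at hsum₁ ⊢; omega⟩
        · constructor
          · intro i hi
            simp only [Finset.mem_Ico] at hi
            simp only [Finset.mem_union, Finset.mem_Ico]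
            omega
          · omega
      · exfalso
        rw [if_neg] at hpark
        · simp at hpark
        · intro hcontra
          exact hcontra.1 c (by simp only [Finset.mem_Ico]; omega)
            (by simp only [Finset.mem_union, Finset.mem_Ico]; omega)

lemma park_all_low : ∀ (ys cs : List ℕ) (k : ℕ), 1 ≤ k → cs.length = ys.length →
    (∀ y ∈ ys, 0 < y) → (∀ c ∈ cs, 1 ≤ c ∧ c ≤ k) →
    parkAux (k - 1 + ys.sum) (Finset.Ico 1 k) cs ys = some (standardStarts k ys) := by
  intro ys
  induction ys with
  | nil =>
    intro cs k hk hlen hpos hcs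
    have : cs = [] := List.eq_nil_of_length_eq_zero (by simpa using hlen)
    subst this
    simp [parkAux, standardStarts]
  | cons y ys ih =>
    intro cs k hk hlen hpos hcs
    cases cs with
    | nil => simp at hlen
    | cons c cs =>
      set M := k - 1 + (y :: ys).sum with hM
      rw [parkAux_cons]
      have hc := hcs c (by simp)
      have hfe : firstEmpty (Finset.Ico 1 k) M c = some k := by
        apply firstEmpty_eq
        · exact hc.2
        · have := hpos y (by simp); simp only [hM, List.sum_cons]; omega
        · intro i h1 h2
          simp only [Finset.mem_Ico]
          exact ⟨le_trans hc.1 h1, h2⟩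
        · simp
      rw [hfe]
      dsimp only
      rw [if_pos]
      · have hocc : Finset.Ico 1 k ∪ Finset.Ico k (k + y) = Finset.Ico 1 (k + y) := by
          ext x
          simp only [Finset.mem_union, Finset.mem_Ico]
          omega
        rw [hocc]
        have hM' : M = (k + y) - 1 + ys.sum := by simp only [hM, List.sum_cons]; omega
        rw [hM']
        rw [ih cs (k + y) (by omega) (by simpa using hlen) (fun q hq => hpos q (by simp [hq]))
          (fun q hq => ⟨(hcs q (by simp [hq])).1, le_trans (hcs q (by simp [hq])).2 (by omega)⟩)]
        simp [standardStarts]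
      · constructor
        · intro i hi
          simp only [Finset.mem_Ico] at hi ⊢
          omega
        · simp only [hM, List.sum_cons]; omega

def boundedLists (z : ℕ) : ℕ → Finset (List ℕ)
  | 0 => {[]}
  | n+1 => (Finset.Icc 1 z ×ˢ boundedLists z n).image (fun p => p.1 :: p.2)

lemma mem_boundedLists (z : ℕ) : ∀ n (l : List ℕ),
    l ∈ boundedLists z n ↔ l.length = n ∧ ∀ c ∈ l, 1 ≤ c ∧ c ≤ z := by
  intro n
  induction n with
  | zero =>
    intro l
    simp only [boundedLists, Finset.mem_singleton]
    constructor
    · rintro rfl; simp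
    · rintro ⟨h, _⟩; exact List.eq_nil_of_length_eq_zero h
  | succ n ih =>
    intro l
    simp only [boundedLists, Finset.mem_image, Finset.mem_product, Finset.mem_Icc]
    constructor
    · rintro ⟨⟨a, m⟩, ⟨ha, hm⟩, rfl⟩
      obtain ⟨hlen, hmem⟩ := (ih m).1 hm
      refine ⟨by simp [hlen], ?_⟩
      intro c hc
      rcases List.mem_cons.1 hc with rfl | hc
      · exact ha
      · exact hmem c hc
    · rintro ⟨hlen, hmem⟩
      cases l with
      | nil => simp at hlen
      | cons a m =>
        exact ⟨(a, m), ⟨hmem a (by simp),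
          (ih m).2 ⟨by simpa using hlen, fun c hc => hmem c (by simp [hc])⟩⟩, rfl⟩

lemma card_boundedLists (z : ℕ) : ∀ n, (boundedLists z n).card = z ^ n := by
  intro n
  induction n with
  | zero => simp [boundedLists]
  | succ n ih =>
    rw [boundedLists, Finset.card_image_of_injective _
      (fun p q h => by
        obtain ⟨a, m⟩ := p; obtain ⟨b, k⟩ := q
        simpa [Prod.ext_iff] using h)]
    rw [Finset.card_product, ih, Nat.card_Icc]
    rw [pow_succ]
    simp [mul_comm]

/-- The necessity direction: a permutation-invariant parking sequence has all entries `≤ z`. -/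
lemma necessity (z : ℕ) (hz : 0 < z) (ys : List ℕ)
    (hypos : ∀ y ∈ ys, 0 < y) (hinc : List.Pairwise (· < ·) ys)
    (cs : List ℕ) (hpi : PermInvariant ys cs z) (c₀ : ℕ) (hc₀ : c₀ ∈ cs) (hgt : z < c₀) :
    False := by
  obtain ⟨hlen0, hpos1, _⟩ := hpi cs (List.Perm.refl cs)
  -- the minimal entry exceeding z
  set c := sInf {x | x ∈ cs ∧ z < x} with hcdef
  have hne : {x | x ∈ cs ∧ z < x}.Nonempty := ⟨c₀, hc₀, hgt⟩
  have hcmem : c ∈ cs ∧ z < c := Nat.sInf_mem hne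
  have hcmin : ∀ x ∈ cs, z < x → c ≤ x := fun x hx hzx => Nat.sInf_le ⟨hx, hzx⟩
  set S := cs.filter (fun x => decide (x ≤ z)) with hSdef
  set Bf := cs.filter (fun x => !decide (x ≤ z)) with hBfdef
  have hperm0 : (S ++ Bf).Perm cs := List.filter_append_perm _ cs
  have hcBf : c ∈ Bf := by
    rw [hBfdef, List.mem_filter]
    exact ⟨hcmem.1, by simp; omega⟩
  set B := Bf.erase c with hBdef
  have hBperm : Bf.Perm (c :: B) := List.perm_cons_erase hcBf
  have hS : ∀ p ∈ S, 1 ≤ p ∧ p ≤ z := by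
    intro p hp
    rw [hSdef, List.mem_filter] at hp
    exact ⟨hpos1 p hp.1, by simpa using hp.2⟩
  have hB : ∀ p ∈ B, c ≤ p := by
    intro p hp
    have hp' := List.mem_of_mem_erase hp
    rw [hBfdef, List.mem_filter] at hp'
    exact hcmin p hp'.1 (by simpa using hp'.2)
  have hO₁perm : (c :: (S ++ B)).Perm cs :=
    (List.perm_middle.symm.trans (List.Perm.append_left S hBperm.symm)).trans hperm0
  clear hperm0 hcBf hBperm hne
  clear hBdef hBfdef hSdef hcdef
  clear_value B Bf S c
  clear Bf
  obtain ⟨hlen₁, _, hpark₁⟩ := hpi _ hO₁perm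
  -- split ys
  cases ys with
  | nil =>
    rw [List.length_nil] at hlen0
    rw [List.eq_nil_of_length_eq_zero hlen0] at hc₀
    simp at hc₀
  | cons y₁ u =>
  rw [parkResult] at hpark₁
  set M := z - 1 + (y₁ :: u).sum with hMdef
  have hMsum : M = z - 1 + (y₁ + u.sum) := by simp [hMdef]
  have hy₁ : 0 < y₁ := hypos y₁ (by simp)
  -- car 1 of O₁ parks at [c, c+y₁)
  by_cases hcM : c ≤ M
  swap
  · rw [parkAux_cons, firstEmpty_none _ _ _ (by omega)] at hpark₁
    simp at hpark₁
  have hfe₁ : firstEmpty (Finset.Ico 1 z) M c = some c := by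
    apply firstEmpty_eq _ _ _ _ le_rfl hcM
    · intro i h1 h2; omega
    · simp only [Finset.mem_Ico]; omega
  rw [parkAux_cons, hfe₁] at hpark₁
  dsimp only at hpark₁
  by_cases hb₁ : c + y₁ - 1 ≤ M
  swap
  · rw [if_neg (by intro hcontra; exact hb₁ hcontra.2)] at hpark₁
    simp at hpark₁
  rw [if_pos ⟨by intro i hi; simp only [Finset.mem_Ico] at hi ⊢; omega, hb₁⟩,
    Option.isSome_map] at hpark₁
  -- lengths bookkeeping
  have hlenS : S.length ≤ u.length := by
    have := hO₁perm.length_eq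
    simp only [List.length_cons, List.length_append] at this hlen0 hlen₁ ⊢
    omega
  rw [← List.take_append_drop S.length u] at hpark₁
  obtain ⟨L₁, L₂, hsplitL, hsumL₁⟩ := attack M S (u.take S.length) B (u.drop S.length)
    z c (c + y₁) (by rw [List.length_take]; omega) (by omega) (by omega) (by omega) hz
    hS hB (by rw [List.sum_take_add_sum_drop]; omega) hpark₁
  -- S nonempty
  cases S with
  | nil =>
    simp only [List.length_nil, List.take_zero] at hsplitL
    have : L₁ = [] := (List.append_eq_nil_iff.mp hsplitL.symm).1
    rw [this] at hsumL₁
    simp at hsumL₁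
    omega
  | cons s₀ S' =>
  -- u = y₂ :: w
  cases u with
  | nil => simp at hlenS
  | cons y₂ w =>
  rw [List.length_cons, List.take_succ_cons] at hsplitL
  cases L₁ with
  | nil => simp at hsumL₁; omega
  | cons e L₁' =>
  rw [List.cons_append, List.cons.injEq] at hsplitL
  obtain ⟨rfl, hQsplit⟩ := hsplitL
  have hsumL : y₂ + L₁'.sum = c - z := by simpa using hsumL₁
  have hy₁₂ : y₁ < y₂ := (List.pairwise_cons.mp hinc).1 y₂ (by simp)
  have hw : ∀ x ∈ w, y₂ < x := (List.pairwise_cons.mp (List.pairwise_cons.mp hinc).2).1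
  have hcz : z + y₁ < c := by omega
  -- second order O₂
  have hO₂perm : (s₀ :: c :: (S' ++ B)).Perm cs :=
    (List.Perm.swap c s₀ _).trans hO₁perm
  obtain ⟨_, _, hpark₂⟩ := hpi _ hO₂perm
  rw [parkResult] at hpark₂
  rw [← hMdef] at hpark₂
  have hs₀ := hS s₀ (by simp)
  -- car 1 of O₂ parks at [z, z+y₁)
  have hfe₂ : firstEmpty (Finset.Ico 1 z) M s₀ = some z := by
    apply firstEmpty_eq _ _ _ _ hs₀.2 (by omega)
    · intro i h1 h2
      simp only [Finset.mem_Ico]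
      exact ⟨le_trans hs₀.1 h1, h2⟩
    · simp
  rw [parkAux_cons, hfe₂] at hpark₂
  dsimp only at hpark₂
  rw [if_pos ⟨by intro i hi; simp only [Finset.mem_Ico] at hi ⊢; omega,
      by simp only [hMsum]; omega⟩, Option.isSome_map] at hpark₂
  have hocc₂ : Finset.Ico 1 z ∪ Finset.Ico z (z + y₁) = Finset.Ico 1 (z + y₁) := by
    ext x
    simp only [Finset.mem_union, Finset.mem_Ico]
    omega
  rw [hocc₂] at hpark₂
  -- car 2 of O₂ parks at [c, c+y₂)
  have hfe₃ : firstEmpty (Finset.Ico 1 (z + y₁)) M c = some c := by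
    apply firstEmpty_eq _ _ _ _ le_rfl hcM
    · intro i h1 h2; omega
    · simp only [Finset.mem_Ico]; omega
  rw [parkAux_cons, hfe₃] at hpark₂
  dsimp only at hpark₂
  by_cases hb₂ : c + y₂ - 1 ≤ M
  swap
  · rw [if_neg (by intro hcontra; exact hb₂ hcontra.2)] at hpark₂
    simp at hpark₂
  rw [if_pos ⟨by intro i hi; simp only [Finset.mem_Ico] at hi ⊢; omega, hb₂⟩,
    Option.isSome_map] at hpark₂
  -- attack from state Ico 1 (z+y₁) ∪ Ico c (c+y₂)
  have hy₂ : 0 < y₂ := by omega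
  have hlenS' : S'.length ≤ w.length := by
    have := hO₂perm.length_eq
    simp only [List.length_cons, List.length_append] at this hlen0 ⊢
    omega
  rw [← List.take_append_drop S'.length w] at hpark₂
  obtain ⟨Q₁, Q₂, hsplitQ, hsumQ₁⟩ := attack M S' (w.take S'.length) B (w.drop S'.length)
    (z + y₁) c (c + y₂) (by rw [List.length_take]; omega) (by omega) (by omega) (by omega)
    (by omega)
    (fun q hq => ⟨(hS q (by simp [hq])).1, le_trans (hS q (by simp [hq])).2 (by omega)⟩)
    hB
    (by
      rw [List.sum_take_add_sum_drop]
      have : M = z - 1 + (y₁ + (y₂ + w.sum)) := by simp [hMdef]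
      omega)
    hpark₂
  -- final contradiction: two splits of w.take S'.length
  rw [hQsplit] at hsplitQ
  have hsQ : Q₁.sum = c - (z + y₁) := hsumQ₁
  rcases List.append_eq_append_iff.mp hsplitQ with ⟨a', ha₁, _⟩ | ⟨c', hc₁, _⟩
  · -- Q₁ = L₁' ++ a'
    rw [ha₁, List.sum_append] at hsQ
    cases a' with
    | nil => simp at hsQ; omega
    | cons e rest =>
      have he : e ∈ w := by
        have h1 : e ∈ Q₁ ++ Q₂ := by rw [ha₁]; simp
        rw [← hsplitQ, ← hQsplit] at h1
        exact List.mem_of_mem_take h1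
      have hlt := hw e he
      simp only [List.sum_cons] at hsQ
      omega
  · -- L₁' = Q₁ ++ c'
    rw [hc₁, List.sum_append] at hsumL
    omega

theorem stmt7 (n z : ℕ) (hn : 0 < n) (hz : 0 < z) (ys : List ℕ)
    (hylen : ys.length = n) (hypos : ∀ y ∈ ys, 0 < y)
    (hinc : List.Pairwise (· < ·) ys) :
    {cs : List ℕ | PermInvariant ys cs z} =
      {cs : List ℕ | cs.length = n ∧ ∀ c ∈ cs, 1 ≤ c ∧ c ≤ z} ∧
    {cs : List ℕ | PermInvariant ys cs z}.ncard = z ^ n := by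
  have hsetEq : {cs : List ℕ | PermInvariant ys cs z} =
      {cs : List ℕ | cs.length = n ∧ ∀ c ∈ cs, 1 ≤ c ∧ c ≤ z} := by
    ext cs
    simp only [Set.mem_setOf_eq]
    constructor
    · intro hpi
      obtain ⟨hlen, hpos1, _⟩ := hpi cs (List.Perm.refl cs)
      refine ⟨hlen.trans hylen, fun c hc => ⟨hpos1 c hc, ?_⟩⟩
      by_contra hgt
      exact necessity z hz ys hypos hinc cs hpi c hc (by omega)
    · rintro ⟨hlen, hb⟩ cs' hperm
      have hmem : ∀ c ∈ cs', 1 ≤ c ∧ c ≤ z := fun c hc => hb c (hperm.mem_iff.mp hc)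
      refine ⟨by rw [hperm.length_eq, hlen, hylen], fun c hc => (hmem c hc).1, ?_⟩
      rw [parkResult, park_all_low ys cs' z hz (by rw [hperm.length_eq, hlen, hylen]) hypos hmem]
      rfl
  refine ⟨hsetEq, ?_⟩
  rw [hsetEq]
  have : {cs : List ℕ | cs.length = n ∧ ∀ c ∈ cs, 1 ≤ c ∧ c ≤ z} = ↑(boundedLists z n) := by
    ext l
    simp only [Set.mem_setOf_eq, Finset.coe_sort_coe, Finset.mem_coe, mem_boundedLists]
  rw [this, Set.ncard_coe_finset, card_boundedLists]
end

section
/- Let y = (k,k,...,k) ∈ (Z_+)^n with k > 1 and z ∈ Z_+. Then c = (c_1,...,c_n) is a permutation-invariant parking sequence for (y;z) if and only if (i) the order statistics satisfy c_{(i)} ≤ z + (i-1)k for all i ∈ [n], and (ii) every entry c_i lies in the set {1,2,...,z} ∪ {z+k, z+2k, ..., z+(n-1)k}. -/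
open Finset

lemma find?_range'_eq_some (p : ℕ → Bool) (j : ℕ) :
    ∀ c len, c ≤ j → j < c + len → p j = true → (∀ i, c ≤ i → i < j → p i = false) →
    (List.range' c len).find? p = some j := by
  intro c len
  induction len generalizing c with
  | zero => intro h1 h2; omega
  | succ m ih =>
    intro h1 h2 hp hlow
    rw [List.range'_succ, List.find?_cons]
    rcases eq_or_lt_of_le h1 with rfl | hlt
    · simp [hp]
    · rw [hlow c le_rfl hlt]
      exact ih (c+1) (by omega) (by omega) hp (fun i h1 h2 => hlow i (by omega) h2)

lemma firstEmpty_eq_some (occ : Finset ℕ) (M c j : ℕ) (h1 : c ≤ j) (h2 : j ≤ M)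
    (h3 : j ∉ occ) (h4 : ∀ i, c ≤ i → i < j → i ∈ occ) :
    firstEmpty occ M c = some j := by
  apply find?_range'_eq_some _ _ _ _ h1 (by omega) (by simpa using h3)
  intro i hi1 hi2; simpa using h4 i hi1 hi2

lemma firstEmpty_sound {occ : Finset ℕ} {M c j : ℕ} (h : firstEmpty occ M c = some j) :
    c ≤ j ∧ j ≤ M ∧ j ∉ occ := by
  have h1 := List.find?_some h
  have h2 := List.mem_of_find?_eq_some h
  rw [List.mem_range'_1] at h2
  simp only [decide_eq_true_eq] at h1
  exact ⟨h2.1, by omega, h1⟩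

example (M : ℕ) (occ : Finset ℕ) (c y : ℕ) (cs ys : List ℕ) :
    parkAux M occ (c :: cs) (y :: ys) = match firstEmpty occ M c with
    | none => none
    | some j =>
      if (∀ i ∈ Finset.Ico j (j + y), i ∉ occ) ∧ j + y - 1 ≤ M then
        (parkAux M (occ ∪ Finset.Ico j (j + y)) cs ys).map (j :: ·)
      else none := by
  rfl

lemma parkAux_cons_sound {M : ℕ} {occ : Finset ℕ} {c y : ℕ} {cs ys js : List ℕ}
    (h : parkAux M occ (c :: cs) (y :: ys) = some js) :
    ∃ j js', firstEmpty occ M c = some j ∧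
      (∀ i ∈ Finset.Ico j (j + y), i ∉ occ) ∧ j + y - 1 ≤ M ∧
      parkAux M (occ ∪ Finset.Ico j (j + y)) cs ys = some js' ∧ js = j :: js' := by
  rw [show parkAux M occ (c :: cs) (y :: ys) = match firstEmpty occ M c with
    | none => none
    | some j =>
      if (∀ i ∈ Finset.Ico j (j + y), i ∉ occ) ∧ j + y - 1 ≤ M then
        (parkAux M (occ ∪ Finset.Ico j (j + y)) cs ys).map (j :: ·)
      else none from rfl] at h
  rcases hfe : firstEmpty occ M c with _ | j <;> rw [hfe] at h
  · simp at h
  · simp only [] at h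
    split_ifs at h with hif
    · rcases Option.map_eq_some_iff.mp h with ⟨js', hjs', rfl⟩
      exact ⟨j, js', rfl, hif.1, hif.2, hjs', rfl⟩

lemma parkAux_soundA (M : ℕ) :
    ∀ (cs : List ℕ) (ys : List ℕ) (occ : Finset ℕ) (js : List ℕ) (t : ℕ),
    parkAux M occ cs ys = some js →
    ∃ B : Finset ℕ, Disjoint B occ ∧ B ⊆ Finset.Ico t (M+1) ∧
      B.card = (((cs.zip ys).filter (fun p => decide (t ≤ p.1))).map Prod.snd).sum := by
  intro cs
  induction cs with
  | nil =>
    intro ys occ js t h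
    exact ⟨∅, by simp⟩
  | cons c cs ih =>
    intro ys occ js t h
    match ys with
    | [] => exact absurd h (by rw [show parkAux M occ (c::cs) [] = none from rfl]; simp)
    | y :: ys =>
      obtain ⟨j, js', hfe, hfree, hend, hrec, rfl⟩ := parkAux_cons_sound h
      obtain ⟨hcj, hjM, hjocc⟩ := firstEmpty_sound hfe
      obtain ⟨B', hB'disj, hB'sub, hB'card⟩ := ih ys (occ ∪ Finset.Ico j (j+y)) js' t hrec
      have hblock : Finset.Ico j (j+y) ⊆ Finset.Ico t (M+1) ∨ ¬ t ≤ c := by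
        by_cases htc : t ≤ c
        · left; intro x hx
          rw [Finset.mem_Ico] at hx ⊢
          omega
        · right; exact htc
      by_cases htc : t ≤ c
      · refine ⟨B' ∪ Finset.Ico j (j+y), ?_, ?_, ?_⟩
        · rw [Finset.disjoint_union_left]
          constructor
          · exact hB'disj.mono_right Finset.subset_union_left
          · rw [Finset.disjoint_left]; intro x hx; exact hfree x hx
        · apply Finset.union_subset (hB'sub)
          rcases hblock with hb | hb
          · exact hb
          · exact absurd htc hb
        · rw [Finset.card_union_of_disjoint (hB'disj.mono_right Finset.subset_union_right).symm.symm]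
          · rw [List.zip_cons_cons, List.filter_cons_of_pos (by simpa using htc)]
            simp only [List.map_cons, List.sum_cons, Nat.card_Ico]
            omega
      · refine ⟨B', hB'disj.mono_right Finset.subset_union_left, hB'sub, ?_⟩
        rw [List.zip_cons_cons, List.filter_cons_of_neg (by simpa using htc)]
        exact hB'card

lemma parkAux_soundB (M k : ℕ) :
    ∀ (cs ys : List ℕ) (occ : Finset ℕ) (js : List ℕ),
    parkAux M occ cs ys = some js →
    (∀ y ∈ ys, y = k) → (∀ c ∈ cs, 1 ≤ c) → ∀ t ∈ occ,
    ∃ B : Finset ℕ, Disjoint B occ ∧ B ⊆ Finset.Ico 1 (M+1) ∧ B.card = ys.sum ∧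
      k ∣ (B.filter (· < t)).card := by
  intro cs
  induction cs with
  | nil =>
    intro ys occ js h hys hcs t ht
    match ys with
    | [] => exact ⟨∅, by simp⟩
    | y :: ys => exact absurd h (by rw [show parkAux M occ [] (y::ys) = none from rfl]; simp)
  | cons c cs ih =>
    intro ys occ js h hys hcs t ht
    match ys with
    | [] => exact absurd h (by rw [show parkAux M occ (c::cs) [] = none from rfl]; simp)
    | y :: ys =>
      obtain ⟨j, js', hfe, hfree, hend, hrec, rfl⟩ := parkAux_cons_sound h
      obtain ⟨hcj, hjM, hjocc⟩ := firstEmpty_sound hfe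
      have hyk : y = k := hys y (by simp)
      have hc1 : 1 ≤ c := hcs c (by simp)
      obtain ⟨B', hB'disj, hB'sub, hB'card, hB'dvd⟩ :=
        ih ys (occ ∪ Finset.Ico j (j+y)) js' hrec (fun y' hy' => hys y' (by simp [hy']))
          (fun c' hc' => hcs c' (by simp [hc'])) t (Finset.mem_union_left _ ht)
      have hblockdisj : Disjoint (Finset.Ico j (j+y)) occ := by
        rw [Finset.disjoint_left]; intro x hx; exact hfree x hx
      have hBdisj : Disjoint B' (Finset.Ico j (j+y)) :=
        hB'disj.mono_right Finset.subset_union_right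
      have htblock : t ∉ Finset.Ico j (j+y) := fun hx => hfree t hx ht
      refine ⟨B' ∪ Finset.Ico j (j+y), ?_, ?_, ?_, ?_⟩
      · rw [Finset.disjoint_union_left]
        exact ⟨hB'disj.mono_right Finset.subset_union_left, hblockdisj⟩
      · apply Finset.union_subset hB'sub
        intro x hx
        rw [Finset.mem_Ico] at hx ⊢
        omega
      · rw [Finset.card_union_of_disjoint hBdisj, Nat.card_Ico, List.sum_cons]
        omega
      · rw [Finset.filter_union, Finset.card_union_of_disjoint
          (Finset.disjoint_filter_filter hBdisj)]
        have hbf : k ∣ ((Finset.Ico j (j+y)).filter (· < t)).card := by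
          rw [Finset.mem_Ico] at htblock
          by_cases hjt : j < t
          · have : t ≥ j + y := by omega
            rw [Finset.filter_true_of_mem (fun x hx => by rw [Finset.mem_Ico] at hx; omega)]
            rw [Nat.card_Ico]
            exact ⟨1, by omega⟩
          · rw [Finset.filter_false_of_mem (fun x hx => by rw [Finset.mem_Ico] at hx; omega)]
            simp
        exact Nat.dvd_add hB'dvd hbf

lemma range_filter_le_card (n r : ℕ) :
    ((Finset.range n).filter (fun s => r ≤ s)).card = n - r := by
  have h : (Finset.range n).filter (fun s => r ≤ s) = Finset.Ico r n := by
    ext x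
    simp only [Finset.mem_filter, Finset.mem_range, Finset.mem_Ico]
    omega
  rw [h, Nat.card_Ico]

lemma filter_ge_mono_card (S : Finset ℕ) (r r' : ℕ) (h : r ≤ r')
    (hsub : ∀ s, r ≤ s → s < r' → s ∈ S) :
    (S.filter (fun s => r' ≤ s)).card + (r' - r) ≤ (S.filter (fun s => r ≤ s)).card := by
  have hd : Disjoint (S.filter (fun s => r' ≤ s)) (Finset.Ico r r') := by
    rw [Finset.disjoint_left]
    intro x hx hx'
    rw [Finset.mem_filter] at hx
    rw [Finset.mem_Ico] at hx'
    omega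
  have hsub2 : S.filter (fun s => r' ≤ s) ∪ Finset.Ico r r' ⊆ S.filter (fun s => r ≤ s) := by
    intro x hx
    rw [Finset.mem_union, Finset.mem_filter, Finset.mem_Ico] at hx
    rw [Finset.mem_filter]
    rcases hx with ⟨h1, h2⟩ | ⟨h1, h2⟩
    · exact ⟨h1, by omega⟩
    · exact ⟨hsub x h1 h2, h1⟩
  calc (S.filter (fun s => r' ≤ s)).card + (r' - r)
      = (S.filter (fun s => r' ≤ s) ∪ Finset.Ico r r').card := by
        rw [Finset.card_union_of_disjoint hd, Nat.card_Ico]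
    _ ≤ _ := Finset.card_le_card hsub2

lemma block_eq_of_mem {z k s i x : ℕ}
    (h1 : z + s*k ≤ x) (h2 : x < z + s*k + k) (h3 : z + i*k ≤ x) (h4 : x < z + i*k + k) :
    s = i := by
  rcases lt_trichotomy s i with h | h | h
  · exfalso
    have hm : (s+1) * k ≤ i * k := Nat.mul_le_mul_right k h
    rw [add_mul, one_mul] at hm
    generalize s * k = a at *
    generalize i * k = b at *
    omega
  · exact h
  · exfalso
    have hm : (i+1) * k ≤ s * k := Nat.mul_le_mul_right k h
    rw [add_mul, one_mul] at hm
    generalize s * k = a at *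
    generalize i * k = b at *
    omega

lemma mem_own_block {z k x : ℕ} (hk : 0 < k) (hzx : z ≤ x) :
    z + ((x-z)/k)*k ≤ x ∧ x < z + ((x-z)/k)*k + k := by
  have h1 : ((x-z)/k)*k ≤ x - z := Nat.div_mul_le_self _ _
  have h2 : x - z < ((x-z)/k)*k + k := Nat.lt_div_mul_add hk
  generalize ((x-z)/k)*k = w at *
  omega

lemma parkAux_succeeds (n k z : ℕ) (hk : 1 < k) (hz : 0 < z) :
    ∀ (cs : List ℕ) (S : Finset ℕ), S ⊆ Finset.range n →
    cs.length + S.card = n →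
    (∀ c ∈ cs, 1 ≤ c) →
    (∀ c ∈ cs, c ≤ z ∨ ∃ s, 1 ≤ s ∧ s ≤ n-1 ∧ c = z + s*k) →
    (∀ r, 1 ≤ r → cs.countP (fun c => decide (z + r*k ≤ c)) + (S.filter (fun s => r ≤ s)).card
        ≤ ((Finset.range n).filter (fun s => r ≤ s)).card) →
    (parkAux (z-1+n*k) (Finset.Ico 1 z ∪ S.biUnion (fun s => Finset.Ico (z+s*k) (z+s*k+k)))
      cs (List.replicate cs.length k)).isSome = true := by
  intro cs
  induction cs with
  | nil => intro S _ _ _ _ _; rfl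
  | cons c cs ih =>
    intro S hSsub hlen hpos hallow hinv
    set M := z - 1 + n*k with hM
    set f : ℕ → Finset ℕ := fun s => Finset.Ico (z+s*k) (z+s*k+k) with hf
    set occ := Finset.Ico 1 z ∪ S.biUnion f with hocc
    -- the requirement r of car c
    obtain ⟨r, hr_c, hr_ub, hr_cnt, hr_lb⟩ :
        ∃ r, c ≤ z + r*k ∧ r ≤ n-1 ∧ (1 ≤ r → z + r*k ≤ c) ∧
          (∀ x, c ≤ x → z ≤ x → r ≤ (x-z)/k) := by
      rcases hallow c (by simp) with hcz | ⟨s, hs1, hs2, rfl⟩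
      · exact ⟨0, by omega, by omega, by omega, fun _ _ _ => Nat.zero_le _⟩
      · refine ⟨s, le_rfl, hs2, fun _ => le_rfl, fun x hcx hzx => ?_⟩
        rw [Nat.le_div_iff_mul_le (by omega)]
        omega
    -- the set of available blocks with index ≥ r
    set T : Finset ℕ := (Finset.range n).filter (fun s => r ≤ s ∧ s ∉ S) with hT
    have hTne : T.Nonempty := by
      rw [Finset.nonempty_iff_ne_empty]
      intro hTe
      have hsub : (Finset.range n).filter (fun s => r ≤ s) ⊆ S.filter (fun s => r ≤ s) := by
        intro x hx
        rw [Finset.mem_filter] at hx ⊢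
        refine ⟨?_, hx.2⟩
        by_contra hxS
        have : x ∈ T := by
          rw [hT, Finset.mem_filter]
          exact ⟨hx.1, hx.2, hxS⟩
        rw [hTe] at this
        exact absurd this (Finset.notMem_empty x)
      have hcard := Finset.card_le_card hsub
      rcases Nat.eq_zero_or_pos r with rfl | hr1
      · have h1 : (S.filter (fun s => (0:ℕ) ≤ s)).card ≤ S.card :=
          Finset.card_le_card (Finset.filter_subset _ _)
        rw [range_filter_le_card] at hcard
        simp only [List.length_cons] at hlen
        omega
      · have h2 := hinv r hr1
        have h3 : (c :: cs).countP (fun c' => decide (z + r*k ≤ c')) ≥ 1 := by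
          have := List.countP_cons_of_pos (p := fun c' => decide (z + r*k ≤ c'))
            (l := cs) (a := c) (by simpa using hr_cnt hr1)
          omega
        omega
    set i := T.min' hTne with hi
    have hiT : i ∈ T := Finset.min'_mem _ _
    have hi_props : i < n ∧ r ≤ i ∧ i ∉ S := by
      have := hiT
      rw [hT, Finset.mem_filter, Finset.mem_range] at this
      exact ⟨this.1, this.2.1, this.2.2⟩
    obtain ⟨hin, hri, hiS⟩ := hi_props
    have hmin : ∀ s, r ≤ s → s < i → s ∈ S := by
      intro s h1 h2
      by_contra hsS
      have : s ∈ T := by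
        rw [hT, Finset.mem_filter, Finset.mem_range]
        exact ⟨by omega, h1, hsS⟩
      have := Finset.min'_le _ _ this
      omega
    -- block i bounds
    have hik_le : i*k + k ≤ n*k := by
      have : (i+1)*k ≤ n*k := Nat.mul_le_mul_right k (by omega)
      rw [add_mul, one_mul] at this
      exact this
    have hc1 : 1 ≤ c := hpos c (by simp)
    -- aux: membership in occ
    have hmem_occ : ∀ x, x ∈ occ ↔ (1 ≤ x ∧ x < z) ∨ ∃ s ∈ S, z + s*k ≤ x ∧ x < z + s*k + k := by
      intro x
      rw [hocc, Finset.mem_union, Finset.mem_Ico]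
      constructor
      · rintro (h | h)
        · exact Or.inl h
        · rw [Finset.mem_biUnion] at h
          obtain ⟨s, hsS, hx⟩ := h
          rw [hf, Finset.mem_Ico] at hx
          exact Or.inr ⟨s, hsS, hx⟩
      · rintro (h | ⟨s, hsS, hx⟩)
        · exact Or.inl h
        · refine Or.inr (Finset.mem_biUnion.mpr ⟨s, hsS, ?_⟩)
          rw [hf, Finset.mem_Ico]
          exact hx
    have hfe : firstEmpty occ M c = some (z + i*k) := by
      apply firstEmpty_eq_some
      · calc c ≤ z + r*k := hr_c
          _ ≤ z + i*k := by
            have := Nat.mul_le_mul_right k hri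
            omega
      · rw [hM]; omega
      · rw [hmem_occ]
        push_neg
        constructor
        · intro _; omega
        · intro s hsS h1
          by_contra h2
          push_neg at h2
          have := block_eq_of_mem h1 h2 (le_refl (z+i*k)) (by omega)
          exact hiS (this ▸ hsS)
      · intro x hcx hxlt
        rw [hmem_occ]
        by_cases hxz : x < z
        · exact Or.inl ⟨by omega, hxz⟩
        · right
          have hzx : z ≤ x := by omega
          obtain ⟨hb1, hb2⟩ := mem_own_block (k := k) (by omega) hzx
          refine ⟨(x-z)/k, ?_, hb1, hb2⟩
          apply hmin _ (hr_lb x hcx hzx)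
          by_contra hsi2
          push_neg at hsi2
          have hmul : i * k ≤ ((x-z)/k) * k := Nat.mul_le_mul_right k hsi2
          generalize ((x-z)/k)*k = a at hb1 hb2 hmul
          generalize i*k = b at hxlt hmul
          omega
    -- the if-condition holds
    have hfree : ∀ x ∈ Finset.Ico (z+i*k) (z+i*k+k), x ∉ occ := by
      intro x hx
      rw [Finset.mem_Ico] at hx
      rw [hmem_occ]
      push_neg
      constructor
      · intro _; omega
      · intro s hsS h1
        by_contra h2
        push_neg at h2
        have := block_eq_of_mem h1 h2 hx.1 hx.2
        exact hiS (this ▸ hsS)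
    have hend : z+i*k + k - 1 ≤ M := by rw [hM]; omega
    -- the new occupied set
    have hocc' : occ ∪ Finset.Ico (z+i*k) (z+i*k+k)
        = Finset.Ico 1 z ∪ (insert i S).biUnion f := by
      rw [Finset.biUnion_insert, hocc]
      ext x
      simp only [Finset.mem_union, hf]
      tauto
    -- unfold one step of parkAux
    rw [List.length_cons, List.replicate_succ]
    rw [show parkAux M occ (c :: cs) (k :: List.replicate cs.length k) =
        (match firstEmpty occ M c with
        | none => none
        | some j =>
          if (∀ i' ∈ Finset.Ico j (j + k), i' ∉ occ) ∧ j + k - 1 ≤ M then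
            (parkAux M (occ ∪ Finset.Ico j (j + k)) cs (List.replicate cs.length k)).map (j :: ·)
          else none) from rfl, hfe]
    simp only []
    rw [if_pos ⟨hfree, hend⟩, hocc', Option.isSome_map]
    -- apply the induction hypothesis
    apply ih (insert i S)
    · intro x hx
      rcases Finset.mem_insert.mp hx with rfl | hxS
      · exact Finset.mem_range.mpr hin
      · exact hSsub hxS
    · rw [Finset.card_insert_of_notMem hiS]
      simp only [List.length_cons] at hlen
      omega
    · intro c' hc'; exact hpos c' (by simp [hc'])
    · intro c' hc'; exact hallow c' (by simp [hc'])
    · intro r' hr'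
      have hS' : (Finset.filter (fun s => r' ≤ s) (insert i S)).card
          = (Finset.filter (fun s => r' ≤ s) S).card + (if r' ≤ i then 1 else 0) := by
        rw [Finset.filter_insert]
        split_ifs with h
        · rw [Finset.card_insert_of_notMem (fun hmem => hiS (Finset.mem_filter.mp hmem).1)]
        · rfl
      have hinv' := hinv r' hr'
      by_cases hcase : z + r'*k ≤ c
      · -- c is counted at r'; then r' ≤ r ≤ i
        have hr'le : r' ≤ i := by
          have h1 : r' * k ≤ r * k := by
            by_contra hgt
            push_neg at hgt
            have := Nat.mul_le_mul_right k (show r+1 ≤ r' by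
              by_contra hh; push_neg at hh
              have := Nat.mul_le_mul_right k (show r' ≤ r by omega)
              omega)
            rw [add_mul, one_mul] at this
            generalize r*k = a at *
            generalize r'*k = b at *
            omega
          have := hri
          by_contra hgt
          push_neg at hgt
          have h2 : r ≤ r' := by
            by_contra hh; push_neg at hh
            omega
          have h3 : r ≤ r' := h2
          -- r ≤ r', r' > i ≥ r. but r' ≤ r from r'*k ≤ r*k? need r' ≤ r:
          have h4 : r' ≤ r := by
            by_contra hh; push_neg at hh
            have := Nat.mul_le_mul_right k (show r+1 ≤ r' by omega)
            rw [add_mul, one_mul] at this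
            generalize r*k = a at *
            generalize r'*k = b at *
            omega
          omega
        rw [hS', if_pos hr'le]
        rw [List.countP_cons_of_pos (by simpa using hcase)] at hinv'
        omega
      · -- c is not counted at r'
        rw [List.countP_cons_of_neg (by simpa using hcase)] at hinv'
        rw [hS']
        split_ifs with hr'i
        · -- r' ≤ i : need strict room
          -- here r < r' (since c < z + r'*k but c ≥ z + r*k would fail...)
          have hrr' : r < r' := by
            by_contra hh
            push_neg at hh
            have := Nat.mul_le_mul_right k hh
            generalize r*k = a at *
            generalize r'*k = b at *
            omega
          have hIco : ∀ s, r ≤ s → s < r' → s ∈ S := fun s h1 h2 => hmin s h1 (by omega)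
          have hmono := filter_ge_mono_card S r r' (by omega) hIco
          have hrange : ((Finset.range n).filter (fun s => r' ≤ s)).card + (r' - r)
              = ((Finset.range n).filter (fun s => r ≤ s)).card := by
            rw [range_filter_le_card, range_filter_le_card]
            omega
          rcases Nat.eq_zero_or_pos r with rfl | hr1
          · -- r = 0 : use the length equation
            have hSfil : (S.filter (fun s => r' ≤ s)).card + r' ≤ S.card := by
              have := filter_ge_mono_card S 0 r' (by omega) (fun s h1 h2 => hmin s (by omega) (by omega))
              have hle : (S.filter (fun s => (0:ℕ) ≤ s)).card ≤ S.card :=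
                Finset.card_le_card (Finset.filter_subset _ _)
              omega
            have hcnt : cs.countP (fun c' => decide (z + r'*k ≤ c')) ≤ cs.length :=
              List.countP_le_length
            rw [range_filter_le_card]
            simp only [List.length_cons] at hlen
            omega
          · -- r ≥ 1: use invariant at r and monotonicity of countP
            have hinvr := hinv r hr1
            rw [List.countP_cons_of_pos (by simpa using hr_cnt hr1)] at hinvr
            have hmono2 : cs.countP (fun c' => decide (z + r'*k ≤ c'))
                ≤ cs.countP (fun c' => decide (z + r*k ≤ c')) := by
              apply List.countP_mono_left
              intro x _ hx
              simp only [decide_eq_true_eq] at hx ⊢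
              have := Nat.mul_le_mul_right k (show r ≤ r' by omega)
              generalize r*k = a at *
              generalize r'*k = b at *
              omega
            rw [range_filter_le_card] at hinvr ⊢
            omega
        · -- r' > i : the filter sets are unchanged
          omega

lemma orderStats_perm (l : List ℕ) : (orderStats l).Perm l := by
  rw [← Multiset.coe_eq_coe, orderStats, Multiset.sort_eq]

lemma orderStats_length (l : List ℕ) : (orderStats l).length = l.length :=
  (orderStats_perm l).length_eq

lemma orderStats_sorted (l : List ℕ) : (orderStats l).Pairwise (· ≤ ·) :=
  Multiset.pairwise_sort _ _

lemma sorted_getElem_le {L : List ℕ} (hs : L.Pairwise (· ≤ ·)) {a b : ℕ} (hab : a ≤ b)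
    (hb : b < L.length) : L[a]'(by omega) ≤ L[b] := by
  rcases eq_or_lt_of_le hab with rfl | h
  · exact le_refl _
  · exact List.pairwise_iff_getElem.mp hs a b (by omega) hb h

lemma sorted_countP_ge (L : List ℕ) (hs : L.Pairwise (· ≤ ·)) (i : ℕ) (hi : i < L.length) :
    L.length - i ≤ L.countP (fun c => decide (L.get ⟨i, hi⟩ ≤ c)) := by
  set p : ℕ → Bool := fun c => decide (L.get ⟨i, hi⟩ ≤ c) with hp
  have hsplit : L.countP p = (L.take i).countP p + (L.drop i).countP p := by
    conv_lhs => rw [← List.take_append_drop i L]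
    rw [List.countP_append]
  have hall : ∀ x ∈ L.drop i, p x = true := by
    intro x hx
    obtain ⟨⟨j, hj⟩, hget⟩ := List.mem_iff_get.mp hx
    rw [hp]
    simp only [decide_eq_true_eq, List.get_eq_getElem]
    rw [← hget]
    simp only [List.get_eq_getElem, List.getElem_drop]
    exact sorted_getElem_le hs (by omega) (by rw [List.length_drop] at hj; omega)
  have hlen : (L.drop i).countP p = L.length - i := by
    rw [List.countP_eq_length.mpr hall, List.length_drop]
  omega

lemma sorted_countP_le (L : List ℕ) (hs : L.Pairwise (· ≤ ·)) (i : ℕ) (hi : i < L.length)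
    (v : ℕ) (hv : L.get ⟨i, hi⟩ ≤ v) :
    L.countP (fun c => decide (v < c)) ≤ L.length - (i+1) := by
  set p : ℕ → Bool := fun c => decide (v < c) with hp
  have hsplit : L.countP p = (L.take (i+1)).countP p + (L.drop (i+1)).countP p := by
    conv_lhs => rw [← List.take_append_drop (i+1) L]
    rw [List.countP_append]
  have htake : (L.take (i+1)).countP p = 0 := by
    rw [List.countP_eq_zero]
    intro x hx
    obtain ⟨⟨j, hj⟩, hget⟩ := List.mem_iff_get.mp hx
    have hji : j ≤ i := by
      rw [List.length_take] at hj
      omega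
    have hgx : x = L[j]'(by omega) := by
      rw [← hget]
      simp only [List.get_eq_getElem, List.getElem_take]
    have hle : x ≤ L[i] := by
      rw [hgx]
      exact sorted_getElem_le hs hji hi
    rw [hp]
    simp only [decide_eq_true_eq]
    simp only [List.get_eq_getElem] at hv
    omega
  have hdrop : (L.drop (i+1)).countP p ≤ L.length - (i+1) := by
    have := List.countP_le_length (p := p) (l := L.drop (i+1))
    rw [List.length_drop] at this
    exact this
  omega

lemma sorted_mem_le_last (L : List ℕ) (hs : L.Pairwise (· ≤ ·)) (hL : L ≠ [])
    (x : ℕ) (hx : x ∈ L) : x ≤ L.getD (L.length - 1) 0 := by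
  have hlen : 0 < L.length := List.length_pos_iff.mpr hL
  obtain ⟨⟨j, hj⟩, hget⟩ := List.mem_iff_get.mp hx
  rw [List.getD_eq_getElem _ _ (by omega), ← hget]
  simp only [List.get_eq_getElem]
  exact sorted_getElem_le hs (by omega) (by omega)

lemma zip_replicate_sum (k t : ℕ) :
    ∀ cs : List ℕ,
    (((cs.zip (List.replicate cs.length k)).filter (fun p => decide (t ≤ p.1))).map
      Prod.snd).sum = k * cs.countP (fun c => decide (t ≤ c)) := by
  intro cs
  induction cs with
  | nil => simp
  | cons c cs ih =>
    rw [List.length_cons, List.replicate_succ, List.zip_cons_cons]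
    by_cases h : t ≤ c
    · rw [List.filter_cons_of_pos (by simpa using h), List.countP_cons_of_pos (by simpa using h)]
      simp only [List.map_cons, List.sum_cons]
      rw [ih]
      ring
    · rw [List.filter_cons_of_neg (by simpa using h), List.countP_cons_of_neg (by simpa using h)]
      exact ih

theorem stmt8 (n k z : ℕ) (hn : 0 < n) (hk : 1 < k) (hz : 0 < z) (cs : List ℕ) :
    PermInvariant (List.replicate n k) cs z ↔
      cs.length = n ∧ (∀ c ∈ cs, 1 ≤ c) ∧
      (∀ i < n, (orderStats cs).getD i 0 ≤ z + i * k) ∧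
      (∀ c ∈ cs, c ≤ z ∨ ∃ s, 1 ≤ s ∧ s ≤ n - 1 ∧ c = z + s * k) := by
  have hMrepl : (List.replicate n k).sum = n * k := by
    rw [List.sum_replicate, smul_eq_mul]
  constructor
  · intro hPI
    obtain ⟨hlen, hpos, hsome⟩ := hPI cs (List.Perm.refl cs)
    rw [List.length_replicate] at hlen
    have hLlen : (orderStats cs).length = n := by rw [orderStats_length, hlen]
    have hLsorted := orderStats_sorted cs
    have hLperm := orderStats_perm cs
    have hOS : ∀ i < n, (orderStats cs).getD i 0 ≤ z + i * k := by
      intro i hi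
      by_contra hgt
      push_neg at hgt
      set t := (orderStats cs).getD i 0 with ht
      rw [parkResult, hMrepl] at hsome
      obtain ⟨js, hjs⟩ := Option.isSome_iff_exists.mp hsome
      obtain ⟨B, hBdisj, hBsub, hBcard⟩ :=
        parkAux_soundA (z-1+n*k) cs (List.replicate n k) _ js t hjs
      have htget : (orderStats cs)[i]'(by omega) = t := by
        rw [ht, List.getD_eq_getElem _ _ (by omega)]
      have hcnt : n - i ≤ cs.countP (fun c => decide (t ≤ c)) := by
        have h1 := sorted_countP_ge (orderStats cs) hLsorted i (by omega)
        rw [← hLperm.countP_eq]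
        simp only [List.get_eq_getElem, htget, hLlen] at h1
        exact h1
      have hsum : B.card = k * cs.countP (fun c => decide (t ≤ c)) := by
        rw [hBcard, ← hlen, zip_replicate_sum]
      have hBle : B.card ≤ (z - 1 + n*k + 1) - t := by
        calc B.card ≤ (Finset.Ico t (z-1+n*k+1)).card := Finset.card_le_card hBsub
          _ = _ := Nat.card_Ico _ _
      have hks : k*(n-i) + i*k = n*k := by
        rw [mul_comm k (n-i), ← add_mul]
        congr 1
        omega
      have hge : k*(n-i) ≤ k * cs.countP (fun c => decide (t ≤ c)) :=
        Nat.mul_le_mul_left k hcnt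
      have h1 : k * cs.countP (fun c => decide (t ≤ c)) ≤ (z - 1 + n*k + 1) - t :=
        hsum ▸ hBle
      have hjpos : k ≤ k*(n-i) := Nat.le_mul_of_pos_right k (by omega)
      omega
    refine ⟨hlen, hpos, hOS, ?_⟩
    intro c hc
    by_contra hnc
    push_neg at hnc
    obtain ⟨hcz, hns⟩ := hnc
    have hkn : (n-1)*k + k = n*k := by
      obtain ⟨m, rfl⟩ : ∃ m, n = m + 1 := ⟨n-1, by omega⟩
      simp [add_mul]
    have hcmax : c ≤ z + (n-1)*k := by
      have h1 := hOS (n-1) (by omega)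
      have h2 := sorted_mem_le_last (orderStats cs) hLsorted
        (by intro h; rw [h] at hLlen; simp at hLlen; omega) c (hLperm.mem_iff.mpr hc)
      rw [hLlen] at h2
      omega
    have hperm := (List.perm_cons_erase hc).symm
    obtain ⟨hlen', hpos', hsome'⟩ := hPI _ hperm
    rw [parkResult, hMrepl] at hsome'
    obtain ⟨js, hjs⟩ := Option.isSome_iff_exists.mp hsome'
    have hnrepl : List.replicate n k = k :: List.replicate (n-1) k := by
      rw [← Nat.succ_pred_eq_of_pos hn, Nat.succ_sub_one, List.replicate_succ]
    rw [hnrepl] at hjs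
    obtain ⟨j, js', hfe, hfree, hend, hrec, rfl⟩ := parkAux_cons_sound hjs
    have hjc : j = c := by
      have heq := firstEmpty_eq_some (Finset.Ico 1 z) (z-1+n*k) c c le_rfl
        (by omega) (by simp [Finset.mem_Ico]; omega) (fun i h1 h2 => by omega)
      rw [heq] at hfe
      exact (Option.some.inj hfe).symm
    rw [hjc] at hrec
    have hcocc : c ∈ Finset.Ico 1 z ∪ Finset.Ico c (c+k) := by
      apply Finset.mem_union_right
      rw [Finset.mem_Ico]
      omega
    obtain ⟨B, hBdisj, hBsub, hBcard, hBdvd⟩ :=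
      parkAux_soundB (z-1+n*k) k (cs.erase c) (List.replicate (n-1) k) _ js' hrec
        (fun y hy => List.eq_of_mem_replicate hy)
        (fun c' hc' => hpos' c' (by simp [hc'])) c hcocc
    have hsum' : (List.replicate (n-1) k).sum = (n-1)*k := by
      rw [List.sum_replicate, smul_eq_mul]
    have hoccsub : Finset.Ico 1 z ∪ Finset.Ico c (c+k) ⊆ Finset.Ico 1 (z-1+n*k+1) := by
      intro x hx
      rw [Finset.mem_union, Finset.mem_Ico, Finset.mem_Ico] at hx
      rw [Finset.mem_Ico]
      omega
    have hBF : B ⊆ Finset.Ico 1 (z-1+n*k+1) \ (Finset.Ico 1 z ∪ Finset.Ico c (c+k)) := by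
      intro x hx
      rw [Finset.mem_sdiff]
      exact ⟨hBsub hx, fun hmem => (Finset.disjoint_left.mp hBdisj hx) hmem⟩
    have hocccard : (Finset.Ico 1 z ∪ Finset.Ico c (c+k)).card = (z-1) + k := by
      rw [Finset.card_union_of_disjoint (by
        rw [Finset.disjoint_left]
        intro x hx hx'
        rw [Finset.mem_Ico] at hx hx'
        omega), Nat.card_Ico, Nat.card_Ico]
      omega
    have hFcard : (Finset.Ico 1 (z-1+n*k+1) \ (Finset.Ico 1 z ∪ Finset.Ico c (c+k))).card
        = (n-1)*k := by
      rw [Finset.card_sdiff_of_subset hoccsub, Nat.card_Ico, hocccard]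
      omega
    have hBeq : B = Finset.Ico 1 (z-1+n*k+1) \ (Finset.Ico 1 z ∪ Finset.Ico c (c+k)) := by
      apply Finset.eq_of_subset_of_card_le hBF
      rw [hFcard, hBcard, hsum']
    have hfil : (Finset.Ico 1 (z-1+n*k+1) \ (Finset.Ico 1 z ∪ Finset.Ico c (c+k))).filter
        (· < c) = Finset.Ico z c := by
      ext x
      rw [Finset.mem_filter, Finset.mem_sdiff, Finset.mem_union, Finset.mem_Ico,
        Finset.mem_Ico, Finset.mem_Ico, Finset.mem_Ico]
      constructor
      · rintro ⟨⟨h1, h2⟩, h3⟩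
        push_neg at h2
        omega
      · intro h
        refine ⟨⟨⟨by omega, by omega⟩, ?_⟩, by omega⟩
        push_neg
        exact ⟨fun _ => by omega, fun _ => by omega⟩
    rw [hBeq, hfil, Nat.card_Ico] at hBdvd
    obtain ⟨q, hq⟩ := hBdvd
    have hq1 : 1 ≤ q := by
      rcases Nat.eq_zero_or_pos q with rfl | h
      · simp at hq; omega
      · exact h
    have hqn : q ≤ n - 1 := by
      have h1 : k * q ≤ k * (n-1) := by
        rw [mul_comm k (n-1)]
        omega
      exact Nat.le_of_mul_le_mul_left h1 (by omega)
    exact hns q hq1 hqn (by rw [mul_comm]; omega)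
  · rintro ⟨hlen, hpos, hOS, hmem⟩
    intro cs' hperm
    have hlen' : cs'.length = n := hperm.length_eq.trans hlen
    refine ⟨by rw [hlen', List.length_replicate], fun c hc => hpos c (hperm.subset hc), ?_⟩
    rw [parkResult, hMrepl]
    have hLlen : (orderStats cs).length = n := by rw [orderStats_length, hlen]
    have hLsorted := orderStats_sorted cs
    have hLperm := orderStats_perm cs
    have hinv : ∀ r, 1 ≤ r →
        cs'.countP (fun c => decide (z + r*k ≤ c)) + ((∅ : Finset ℕ).filter (fun s => r ≤ s)).card
          ≤ ((Finset.range n).filter (fun s => r ≤ s)).card := by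
      intro r hr
      rw [Finset.filter_empty, Finset.card_empty, add_zero, range_filter_le_card]
      rw [hperm.countP_eq]
      by_cases hrn : r < n
      · have hmono : cs.countP (fun c => decide (z + r*k ≤ c))
            ≤ cs.countP (fun c => decide (z + (r-1)*k < c)) := by
          apply List.countP_mono_left
          intro x _ hx
          simp only [decide_eq_true_eq] at hx ⊢
          have h1 : (r-1)*k + k = r*k := by
            obtain ⟨m, rfl⟩ : ∃ m, r = m + 1 := ⟨r-1, by omega⟩
            simp [add_mul]
          omega
        have hle := sorted_countP_le (orderStats cs) hLsorted (r-1) (by omega)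
          (z + (r-1)*k) (by
            simp only [List.get_eq_getElem]
            rw [← List.getD_eq_getElem (orderStats cs) 0 (by omega : r-1 < (orderStats cs).length)]
            exact hOS (r-1) (by omega))
        rw [hLperm.countP_eq, hLlen] at hle
        have : r - 1 + 1 = r := by omega
        rw [this] at hle
        omega
      · have hzero : cs.countP (fun c => decide (z + r*k ≤ c)) = 0 := by
          rw [List.countP_eq_zero]
          intro c hc
          simp only [decide_eq_true_eq]
          push_neg
          have hrk : k ≤ r * k := by
            calc k = 1 * k := (one_mul k).symm
              _ ≤ r * k := Nat.mul_le_mul_right k hr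
          rcases hmem c hc with h | ⟨s, hs1, hs2, rfl⟩
          · omega
          · have hsr : s < r := by omega
            have : (s+1)*k ≤ r*k := Nat.mul_le_mul_right k (by omega)
            rw [add_mul, one_mul] at this
            omega
        omega
    have hres := parkAux_succeeds n k z hk hz cs' ∅ (by simp)
      (by simp [hlen']) (fun c hc => hpos c (hperm.subset hc))
      (fun c hc => hmem c (hperm.subset hc)) hinv
    have hocce : Finset.Ico 1 z ∪ (∅ : Finset ℕ).biUnion
        (fun s => Finset.Ico (z+s*k) (z+s*k+k)) = Finset.Ico 1 z := by simp
    rw [hocce, hlen'] at hres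
    exact hres
end
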